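/- arXiv:1710.08350 — 2 statements merged into one kernel-verified Lean document; each statement's English description precedes it below -/
import Mathlib

section
/- Given a binary relation R on ℝ[x], define the relation R̂ by: p R̂ q if and only if there exist m ≥ 0 and polynomials h_i, p_i, q_i (i = 1,…,m) such that p = ∑_{i=1}^m h_i·p_i, q = ∑_{i=1}^m h_i·q_i, and p_i R q_i for each i. Suppose R is an 𝓛-bisimulation up to, i.e. p R q implies p(v₀) = q(v₀) and 𝓛(p) R̂ 𝓛(q). Then R̂ is an 𝓛-bisimulation for Φ; consequently p R q implies p ∼_Φ q. -/
open MvPolynomial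

/-- The Lie derivative of a polynomial along the polynomial vector field `F`. -/
noncomputable def lieDeriv {N : ℕ} (F : Fin N → MvPolynomial (Fin N) ℝ)
    (p : MvPolynomial (Fin N) ℝ) : MvPolynomial (Fin N) ℝ :=
  ∑ i, pderiv i p * F i

/-- `R` is an 𝓛-bisimulation for the initial value problem `Φ = (F, v₀)`. -/
def IsLBisim {N : ℕ} (F : Fin N → MvPolynomial (Fin N) ℝ) (v₀ : Fin N → ℝ)
    (R : MvPolynomial (Fin N) ℝ → MvPolynomial (Fin N) ℝ → Prop) : Prop :=
  ∀ p q, R p q → eval v₀ p = eval v₀ q ∧ R (lieDeriv F p) (lieDeriv F q)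

/-- `p ∼_Φ q`: the polynomials are related by some 𝓛-bisimulation. -/
def LBisimilar {N : ℕ} (F : Fin N → MvPolynomial (Fin N) ℝ) (v₀ : Fin N → ℝ)
    (p q : MvPolynomial (Fin N) ℝ) : Prop :=
  ∃ R, IsLBisim F v₀ R ∧ R p q

/-- The closure `R̂` of a relation `R`: `p R̂ q` iff `p = ∑ᵢ hᵢ·pᵢ`, `q = ∑ᵢ hᵢ·qᵢ`
with `pᵢ R qᵢ` for each `i`. -/
def UpToClosure {N : ℕ}
    (R : MvPolynomial (Fin N) ℝ → MvPolynomial (Fin N) ℝ → Prop)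
    (p q : MvPolynomial (Fin N) ℝ) : Prop :=
  ∃ (m : ℕ) (h p' q' : Fin m → MvPolynomial (Fin N) ℝ),
    p = ∑ i, h i * p' i ∧ q = ∑ i, h i * q' i ∧ ∀ i, R (p' i) (q' i)


lemma upto_mem {N : ℕ} {R : MvPolynomial (Fin N) ℝ → MvPolynomial (Fin N) ℝ → Prop}
    {p q : MvPolynomial (Fin N) ℝ} (h : R p q) : UpToClosure R p q :=
  ⟨1, fun _ => 1, fun _ => p, fun _ => q, by simp, by simp, fun _ => h⟩

lemma upto_mul {N : ℕ} {R : MvPolynomial (Fin N) ℝ → MvPolynomial (Fin N) ℝ → Prop}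
    {p q : MvPolynomial (Fin N) ℝ} (c : MvPolynomial (Fin N) ℝ)
    (h : UpToClosure R p q) : UpToClosure R (c * p) (c * q) := by
  obtain ⟨m, h', p', q', hp, hq, hR⟩ := h
  exact ⟨m, fun i => c * h' i, p', q',
    by simp [hp, Finset.mul_sum, mul_assoc],
    by simp [hq, Finset.mul_sum, mul_assoc], hR⟩

lemma upto_add {N : ℕ} {R : MvPolynomial (Fin N) ℝ → MvPolynomial (Fin N) ℝ → Prop}
    {p q p₂ q₂ : MvPolynomial (Fin N) ℝ}
    (h1 : UpToClosure R p q) (h2 : UpToClosure R p₂ q₂) :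
    UpToClosure R (p + p₂) (q + q₂) := by
  obtain ⟨m, h', p', q', hp, hq, hR⟩ := h1
  obtain ⟨n, h₂', p₂', q₂', hp₂, hq₂, hR₂⟩ := h2
  refine ⟨m + n, Fin.addCases h' h₂', Fin.addCases p' p₂', Fin.addCases q' q₂', ?_, ?_, ?_⟩
  · rw [Fin.sum_univ_add]; simp [hp, hp₂]
  · rw [Fin.sum_univ_add]; simp [hq, hq₂]
  · intro i
    refine Fin.addCases (fun j => ?_) (fun j => ?_) i <;> simp [hR _, hR₂ _]

lemma upto_zero {N : ℕ} {R : MvPolynomial (Fin N) ℝ → MvPolynomial (Fin N) ℝ → Prop} :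
    UpToClosure R 0 0 := ⟨0, fun i => i.elim0, fun i => i.elim0, fun i => i.elim0, by simp, by simp, fun i => i.elim0⟩

lemma upto_sum {N : ℕ} {R : MvPolynomial (Fin N) ℝ → MvPolynomial (Fin N) ℝ → Prop}
    {m : ℕ} (f g : Fin m → MvPolynomial (Fin N) ℝ)
    (h : ∀ i, UpToClosure R (f i) (g i)) :
    UpToClosure R (∑ i, f i) (∑ i, g i) := by
  induction m with
  | zero => simpa using (upto_zero (R := R))
  | succ n ih =>
    rw [Fin.sum_univ_succ, Fin.sum_univ_succ]
    exact upto_add (h 0) (ih _ _ fun i => h i.succ)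

lemma lieDeriv_mul {N : ℕ} (F : Fin N → MvPolynomial (Fin N) ℝ)
    (a b : MvPolynomial (Fin N) ℝ) :
    lieDeriv F (a * b) = lieDeriv F a * b + a * lieDeriv F b := by
  simp only [lieDeriv, pderiv_mul, add_mul, Finset.sum_add_distrib,
    Finset.sum_mul, Finset.mul_sum, mul_assoc, mul_comm b]

lemma lieDeriv_sum {N : ℕ} (F : Fin N → MvPolynomial (Fin N) ℝ)
    {m : ℕ} (f : Fin m → MvPolynomial (Fin N) ℝ) :
    lieDeriv F (∑ i, f i) = ∑ i, lieDeriv F (f i) := by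
  simp only [lieDeriv, map_sum, Finset.sum_mul]
  rw [Finset.sum_comm]

/-- if `R` is an 𝓛-bisimulation up to, then `R̂` is an 𝓛-bisimulation;
consequently `p R q` implies `p ∼_Φ q`. -/
theorem stmt2
    (N : ℕ) (hN : 1 ≤ N)
    (F : Fin N → MvPolynomial (Fin N) ℝ) (v₀ : Fin N → ℝ)
    (R : MvPolynomial (Fin N) ℝ → MvPolynomial (Fin N) ℝ → Prop)
    (hupto : ∀ p q, R p q →
      eval v₀ p = eval v₀ q ∧ UpToClosure R (lieDeriv F p) (lieDeriv F q)) :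
    IsLBisim F v₀ (UpToClosure R) ∧ ∀ p q, R p q → LBisimilar F v₀ p q := by
  have key : IsLBisim F v₀ (UpToClosure R) := by
    intro p q hpq
    obtain ⟨m, h', p', q', hp, hq, hR⟩ := hpq
    constructor
    · subst hp; subst hq
      simp only [map_sum, map_mul]
      exact Finset.sum_congr rfl fun i _ => by rw [(hupto _ _ (hR i)).1]
    · subst hp; subst hq
      rw [lieDeriv_sum, lieDeriv_sum]
      refine upto_sum _ _ fun i => ?_
      rw [lieDeriv_mul, lieDeriv_mul]
      refine upto_add ?_ (upto_mul _ (hupto _ _ (hR i)).2)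
      obtain ⟨hi⟩ := hupto _ _ (hR i)
      exact ⟨1, fun _ => lieDeriv F (h' i), fun _ => p' i, fun _ => q' i,
        by simp, by simp, fun _ => hR i⟩
  exact ⟨key, fun p q hpq => ⟨UpToClosure R, key, upto_mem hpq⟩⟩
end

section
/- Z_Φ is a Φ-invariant (i.e. Z_Φ is an ideal of ℝ[x], p(v₀) = 0 for every p ∈ Z_Φ, and 𝓛(p) ∈ Z_Φ for every p ∈ Z_Φ), and every Φ-invariant is contained in Z_Φ; hence Z_Φ equals the union of all Φ-invariants. -/
open MvPolynomial

/-- `I` is a `Φ`-invariant ideal: every element vanishes at `v₀` and `I` is closed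
under Lie derivation. -/
def IsInvariantIdeal {N : ℕ} (F : Fin N → MvPolynomial (Fin N) ℝ) (v₀ : Fin N → ℝ)
    (I : Ideal (MvPolynomial (Fin N) ℝ)) : Prop :=
  (∀ p ∈ I, eval v₀ p = 0) ∧ ∀ p ∈ I, lieDeriv F p ∈ I

/-- `Z_Φ`: the set of polynomials whose induced behaviour vanishes identically on `D`. -/
def Zset {N : ℕ} (x : ℝ → Fin N → ℝ) (D : Set ℝ) : Set (MvPolynomial (Fin N) ℝ) :=
  {p | ∀ t ∈ D, eval (x t) p = 0}

private lemma lieDeriv_add {N : ℕ} (F : Fin N → MvPolynomial (Fin N) ℝ)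
    (p q : MvPolynomial (Fin N) ℝ) :
    lieDeriv F (p + q) = lieDeriv F p + lieDeriv F q := by
  simp [lieDeriv, add_mul, Finset.sum_add_distrib]

private lemma lieDeriv_mul_X {N : ℕ} (F : Fin N → MvPolynomial (Fin N) ℝ)
    (p : MvPolynomial (Fin N) ℝ) (n : Fin N) :
    lieDeriv F (p * X n) = lieDeriv F p * X n + p * F n := by
  classical
  simp only [lieDeriv, pderiv_mul, add_mul, Finset.sum_add_distrib]
  congr 1
  · rw [Finset.sum_mul]
    exact Finset.sum_congr rfl fun i _ => by ring
  · rw [Finset.sum_eq_single n]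
    · simp
    · intro b _ hb
      rw [pderiv_X_of_ne (Ne.symm hb)]
      ring
    · simp

private lemma hasDerivAt_eval {N : ℕ} (F : Fin N → MvPolynomial (Fin N) ℝ)
    (D : Set ℝ) (x : ℝ → Fin N → ℝ)
    (hsol : ∀ t ∈ D, HasDerivAt x (fun i => eval (x t) (F i)) t)
    (p : MvPolynomial (Fin N) ℝ) {t : ℝ} (ht : t ∈ D) :
    HasDerivAt (fun s => eval (x s) p) (eval (x t) (lieDeriv F p)) t := by
  induction p using MvPolynomial.induction_on with
  | C a =>
      simp only [eval_C, lieDeriv, pderiv_C, zero_mul, Finset.sum_const_zero, map_zero]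
      exact hasDerivAt_const t a
  | add p q hp hq =>
      simpa only [eval_add, lieDeriv_add, map_add, Pi.add_def] using hp.add hq
  | mul_X p n hp =>
      have hX : HasDerivAt (fun s => x s n) (eval (x t) (F n)) t :=
        hasDerivAt_pi.1 (hsol t ht) n
      simpa only [eval_mul, eval_X, lieDeriv_mul_X, map_add, map_mul, Pi.mul_def] using hp.mul hX

private lemma analytic_eval {N : ℕ} (D : Set ℝ) (x : ℝ → Fin N → ℝ)
    (han : ∀ i, AnalyticOnNhd ℝ (fun t => x t i) D)
    (p : MvPolynomial (Fin N) ℝ) :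
    AnalyticOnNhd ℝ (fun t => eval (x t) p) D := by
  induction p using MvPolynomial.induction_on with
  | C a => simpa only [eval_C] using analyticOnNhd_const (v := a)
  | add p q hp hq => simpa only [eval_add, Pi.add_def] using hp.add hq
  | mul_X p n hp =>
      simp only [eval_mul, eval_X]
      exact hp.mul (han n)

private lemma ev_zero_of_iteratedDeriv {f : ℝ → ℝ} (hf : AnalyticAt ℝ f 0)
    (h : ∀ n, iteratedDeriv n f 0 = 0) : f =ᶠ[nhds 0] 0 := by
  obtain ⟨q, r, hq⟩ := hf
  have key : ∀ y ∈ EMetric.ball (0 : ℝ) r, f y = 0 := by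
    intro y hy
    have h1 := hq.hasSum_iteratedFDeriv hy
    have h2 : ∀ n : ℕ, (n.factorial : ℝ)⁻¹ • (iteratedFDeriv ℝ n f 0 fun _ => y) = 0 := by
      intro n
      rw [iteratedFDeriv_apply_eq_iteratedDeriv_mul_prod, h n, smul_zero, smul_zero]
    simp only [h2] at h1
    simpa using (hasSum_zero.unique h1).symm
  exact Filter.eventuallyEq_of_mem (EMetric.ball_mem_nhds 0 hq.r_pos) key

private lemma inv_subset {N : ℕ} (F : Fin N → MvPolynomial (Fin N) ℝ) (v₀ : Fin N → ℝ)
    (D : Set ℝ) (hD : IsOpen D) (hDc : D.OrdConnected) (h0 : (0 : ℝ) ∈ D)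
    (x : ℝ → Fin N → ℝ)
    (hsol : ∀ t ∈ D, HasDerivAt x (fun i => eval (x t) (F i)) t)
    (hx0 : x 0 = v₀)
    (han : ∀ i, AnalyticOnNhd ℝ (fun t => x t i) D)
    (I : Ideal (MvPolynomial (Fin N) ℝ)) (hI : IsInvariantIdeal F v₀ I) :
    (I : Set (MvPolynomial (Fin N) ℝ)) ⊆ Zset x D := by
  intro p hp
  have hiter : ∀ n, (lieDeriv F)^[n] p ∈ I := by
    intro n
    induction n with
    | zero => exact hp
    | succ n ih =>
        rw [Function.iterate_succ_apply']
        exact hI.2 _ ih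
  have hderiv : ∀ q : MvPolynomial (Fin N) ℝ,
      deriv (fun s => eval (x s) q) =ᶠ[nhds (0 : ℝ)] fun s => eval (x s) (lieDeriv F q) := by
    intro q
    filter_upwards [hD.mem_nhds h0] with s hs
    exact (hasDerivAt_eval F D x hsol q hs).deriv
  have hit : ∀ (n : ℕ) (q : MvPolynomial (Fin N) ℝ),
      iteratedDeriv n (fun s => eval (x s) q) 0 = eval (x 0) ((lieDeriv F)^[n] q) := by
    intro n
    induction n with
    | zero => intro q; simp
    | succ n ih =>
        intro q
        rw [iteratedDeriv_succ', Filter.EventuallyEq.iteratedDeriv_eq n (hderiv q),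
          ih (lieDeriv F q), Function.iterate_succ_apply]
  have hzero : ∀ n, iteratedDeriv n (fun s => eval (x s) p) 0 = 0 := by
    intro n
    rw [hit n p, hx0]
    exact hI.1 _ (hiter n)
  have hev := ev_zero_of_iteratedDeriv ((analytic_eval D x han p) 0 h0) hzero
  have heq := (analytic_eval D x han p).eqOn_zero_of_preconnected_of_eventuallyEq_zero
    hDc.isPreconnected h0 hev
  intro t ht
  exact heq ht

/-- `Z_Φ` is a `Φ`-invariant ideal, every `Φ`-invariant is contained in
`Z_Φ`, and `Z_Φ` equals the union of all `Φ`-invariants. -/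
theorem stmt6
    (N : ℕ) (hN : 1 ≤ N)
    (F : Fin N → MvPolynomial (Fin N) ℝ) (v₀ : Fin N → ℝ)
    (D : Set ℝ) (hD : IsOpen D) (hDc : D.OrdConnected) (h0 : (0 : ℝ) ∈ D)
    (x : ℝ → Fin N → ℝ)
    (hsol : ∀ t ∈ D, HasDerivAt x (fun i => eval (x t) (F i)) t)
    (hx0 : x 0 = v₀)
    (han : ∀ i, AnalyticOnNhd ℝ (fun t => x t i) D) :
    (∃ I : Ideal (MvPolynomial (Fin N) ℝ),
        (I : Set (MvPolynomial (Fin N) ℝ)) = Zset x D ∧ IsInvariantIdeal F v₀ I) ∧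
    (∀ I : Ideal (MvPolynomial (Fin N) ℝ), IsInvariantIdeal F v₀ I →
        (I : Set (MvPolynomial (Fin N) ℝ)) ⊆ Zset x D) ∧
    Zset x D = ⋃ I ∈ {I : Ideal (MvPolynomial (Fin N) ℝ) | IsInvariantIdeal F v₀ I},
        (I : Set (MvPolynomial (Fin N) ℝ)) := by
  -- the ideal with carrier `Zset x D`
  set I₀ : Ideal (MvPolynomial (Fin N) ℝ) :=
    { carrier := Zset x D
      add_mem' := by
        intro a b ha hb t ht
        simp [Zset] at ha hb ⊢
        rw [ha t ht, hb t ht, add_zero]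
      zero_mem' := by intro t ht; simp
      smul_mem' := by
        intro c a ha t ht
        simp only [Zset, Set.mem_setOf_eq] at ha ⊢
        rw [smul_eq_mul, map_mul, ha t ht, mul_zero] } with hI₀
  have hmem : ∀ p, p ∈ I₀ ↔ p ∈ Zset x D := fun p => Iff.rfl
  have hinv : IsInvariantIdeal F v₀ I₀ := by
    constructor
    · intro p hp
      rw [← hx0]
      exact (hmem p).1 hp 0 h0
    · intro p hp t ht
      have hz : (fun s => eval (x s) p) =ᶠ[nhds t] 0 := by
        filter_upwards [hD.mem_nhds ht] with s hs
        exact (hmem p).1 hp s hs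
      have h1 : deriv (fun s => eval (x s) p) t = eval (x t) (lieDeriv F p) :=
        (hasDerivAt_eval F D x hsol p ht).deriv
      rw [← h1, hz.deriv_eq]; exact deriv_const t 0
  refine ⟨⟨I₀, rfl, hinv⟩, fun I hI => inv_subset F v₀ D hD hDc h0 x hsol hx0 han I hI, ?_⟩
  apply Set.Subset.antisymm
  · intro p hp
    exact Set.mem_biUnion (show I₀ ∈ _ from hinv) hp
  · intro p hp
    obtain ⟨S, ⟨I, rfl⟩, hS⟩ := hp
    simp only [Set.mem_iUnion] at hS
    obtain ⟨hI, hpI⟩ := hS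
    exact inv_subset F v₀ D hD hDc h0 x hsol hx0 han I hI hpI
end
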